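/- Let $(a_1,\dots,a_m)$ be a telescopic sequence with gap sequence $w_1<\cdots<w_g$ (the elements of $\mathbb{Z}_{\ge0}\setminus\langle a_1,\dots,a_m\rangle$), where $g$ is the number of gaps. Then $w_g=2g-1$; i.e., the largest gap (Frobenius number) of the numerical semigroup generated by a telescopic sequence equals $2g-1$ where $g$ is the genus. -/

import Mathlib

/-- `dseq a i = gcd(a 1, …, a i)`. -/
def dseq (a : ℕ → ℕ) (i : ℕ) : ℕ := Finset.gcd (Finset.Icc 1 i) a

/-- membership in the numerical semigroup generated by `a 1, …, a m`. -/
def InSemigroup (m : ℕ) (a : ℕ → ℕ) (x : ℕ) : Prop :=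
  ∃ c : ℕ → ℕ, x = ∑ i ∈ Finset.Icc 1 m, c i * a i

/-- `(a 1, …, a m)` is a telescopic sequence. -/
def Telescopic (m : ℕ) (a : ℕ → ℕ) : Prop :=
  2 ≤ m ∧ (∀ i, 1 ≤ i → i ≤ m → 0 < a i) ∧ dseq a m = 1 ∧
  ∀ i, 2 ≤ i → i ≤ m → ∃ c : ℕ → ℕ,
    a i / dseq a i = ∑ j ∈ Finset.Icc 1 (i - 1), c j * (a j / dseq a (i - 1))

/-- membership in the restricted exponent set `B(A_m)`. -/
def InB (m : ℕ) (a : ℕ → ℕ) (k : ℕ → ℕ) : Prop :=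
  (∀ j, (j = 0 ∨ m < j) → k j = 0) ∧
  ∀ i, 2 ≤ i → i ≤ m → k i ≤ dseq a (i - 1) / dseq a i - 1

lemma dseq_one (a : ℕ → ℕ) : dseq a 1 = a 1 := by simp [dseq]

lemma dseq_succ (a : ℕ → ℕ) (i : ℕ) (hi : 1 ≤ i) :
    dseq a (i+1) = Nat.gcd (dseq a i) (a (i+1)) := by
  unfold dseq
  rw [← Finset.insert_Icc_right_eq_Icc_add_one (by omega : 1 ≤ i + 1), Finset.gcd_insert]
  exact Nat.gcd_comm _ _

lemma dseq_dvd (a : ℕ → ℕ) (i j : ℕ) (h1 : 1 ≤ j) (h2 : j ≤ i) : dseq a i ∣ a j :=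
  Finset.gcd_dvd (Finset.mem_Icc.mpr ⟨h1, h2⟩)

lemma dseq_dvd_dseq (a : ℕ → ℕ) (i j : ℕ) (h2 : j ≤ i) : dseq a i ∣ dseq a j := by
  apply Finset.dvd_gcd
  intro x hx
  rw [Finset.mem_Icc] at hx
  exact dseq_dvd a i x hx.1 (le_trans hx.2 h2)

lemma dseq_pos (a : ℕ → ℕ) (i : ℕ) (hi : 1 ≤ i) (ha : 0 < a 1) : 0 < dseq a i :=
  Nat.pos_of_dvd_of_pos (dseq_dvd a i 1 le_rfl hi) ha

lemma dseq_mul (a : ℕ → ℕ) (d : ℕ) (i : ℕ)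
    (hdvd : ∀ j, 1 ≤ j → j ≤ i → d ∣ a j) :
    dseq a i = d * dseq (fun j => a j / d) i := by
  unfold dseq
  have h1 : (Finset.Icc 1 i).gcd (fun j => d * (a j / d)) = normalize d * (Finset.Icc 1 i).gcd (fun j => a j / d) :=
    Finset.gcd_mul_left
  simp only [normalize_eq] at h1
  rw [← h1]
  apply Finset.gcd_congr rfl
  intro x hx
  rw [Finset.mem_Icc] at hx
  simp [Nat.mul_div_cancel' (hdvd x hx.1 hx.2)]

/-- dseq of the divided sequence -/
lemma dseq_div (a : ℕ → ℕ) (d : ℕ) (hd : 0 < d) (i : ℕ)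
    (hdvd : ∀ j, 1 ≤ j → j ≤ i → d ∣ a j) :
    dseq (fun j => a j / d) i = dseq a i / d := by
  rw [dseq_mul a d i hdvd, Nat.mul_div_cancel_left _ hd]

lemma div_div_div (x e d : ℕ) (h1 : d ∣ e) (h2 : e ∣ x) : (x / d) / (e / d) = x / e := by
  rcases Nat.eq_zero_or_pos d with rfl | hd
  · simp at h1; subst h1; simp
  · rw [Nat.div_div_eq_div_mul, Nat.mul_div_cancel' h1]

def Hyp (m : ℕ) (a : ℕ → ℕ) : Prop :=
  (∀ i, 1 ≤ i → i ≤ m → 0 < a i) ∧ dseq a m = 1 ∧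
  ∀ i, 2 ≤ i → i ≤ m → ∃ c : ℕ → ℕ,
    a i / dseq a i = ∑ j ∈ Finset.Icc 1 (i - 1), c j * (a j / dseq a (i - 1))

lemma shrink (m : ℕ) (a : ℕ → ℕ) (hm : 1 ≤ m) (h : Hyp (m+1) a) :
    Hyp m (fun j => a j / dseq a m) := by
  obtain ⟨hpos, _, htel⟩ := h
  set d := dseq a m with hdset
  have hd : 0 < d := dseq_pos a m hm (hpos 1 le_rfl (by omega))
  have hdvd : ∀ j, 1 ≤ j → j ≤ m → d ∣ a j := fun j h1 h2 => dseq_dvd a m j h1 h2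
  have hds : ∀ i, i ≤ m → dseq (fun j => a j / d) i = dseq a i / d := by
    intro i hi
    exact dseq_div a d hd i (fun j h1 h2 => hdvd j h1 (h2.trans hi))
  refine ⟨?_, ?_, ?_⟩
  · intro i h1 h2
    exact Nat.div_pos (Nat.le_of_dvd (hpos i h1 (by omega)) (hdvd i h1 h2)) hd
  · rw [hds m le_rfl, Nat.div_self hd]
  · intro i h2 hi
    obtain ⟨c, hc⟩ := htel i h2 (by omega)
    refine ⟨c, ?_⟩
    have hdd1 : d ∣ dseq a (i-1) := dseq_dvd_dseq a m (i-1) (by omega)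
    have hddi : d ∣ dseq a i := dseq_dvd_dseq a m i hi
    rw [hds i hi, hds (i-1) (by omega)]
    rw [div_div_div _ _ _ hddi (dseq_dvd a i i (by omega) le_rfl), hc]
    apply Finset.sum_congr rfl
    intro j hj
    rw [Finset.mem_Icc] at hj
    rw [div_div_div _ _ _ hdd1 (dseq_dvd a (i-1) j hj.1 hj.2)]

lemma L1 (m : ℕ) : ∀ a : ℕ → ℕ, 1 ≤ m → Hyp m a →
    ∀ n : ℕ, InSemigroup m a n → ∃ k : ℕ → ℕ,
      (∀ i, 2 ≤ i → i ≤ m → k i ≤ dseq a (i-1) / dseq a i - 1) ∧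
      n = ∑ i ∈ Finset.Icc 1 m, k i * a i := by
  induction m with
  | zero => omega
  | succ m ih =>
    intro a _ h n hn
    rcases Nat.eq_zero_or_pos m with rfl | hm
    · -- base case: m+1 = 1
      obtain ⟨c, hc⟩ := hn
      exact ⟨c, by omega, hc⟩
    · -- step
      obtain ⟨hpos, hone, htel⟩ := h
      set d := dseq a m with hdset
      have hd : 0 < d := dseq_pos a m hm (hpos 1 le_rfl (by omega))
      have hdvd : ∀ j, 1 ≤ j → j ≤ m → d ∣ a j := fun j h1 h2 => dseq_dvd a m j h1 h2
      set a' : ℕ → ℕ := fun j => a j / d with ha'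
      have hmul : ∀ j, 1 ≤ j → j ≤ m → a j = d * a' j := by
        intro j h1 h2
        rw [ha']
        exact (Nat.mul_div_cancel' (hdvd j h1 h2)).symm
      have h' : Hyp m a' := shrink m a hm ⟨hpos, hone, htel⟩
      have hds : ∀ i, i ≤ m → dseq a' i = dseq a i / d :=
        fun i hi => dseq_div a d hd i (fun j h1 h2 => hdvd j h1 (h2.trans hi))
      have heq : ∀ i, 2 ≤ i → i ≤ m → dseq a' (i-1) / dseq a' i = dseq a (i-1) / dseq a i := by
        intro i h2 hi
        rw [hds i hi, hds (i-1) (by omega)]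
        exact div_div_div _ _ _ (dseq_dvd_dseq a m i hi) (dseq_dvd_dseq a i (i-1) (by omega))
      -- generator relation for a (m+1)
      have htop : dseq a (m+1) = 1 := hone
      obtain ⟨c', hc'⟩ := htel (m+1) (by omega) le_rfl
      rw [htop, Nat.div_one] at hc'
      simp only [Nat.add_sub_cancel] at hc'
      have hgen : d * a (m+1) = ∑ j ∈ Finset.Icc 1 m, c' j * a j := by
        rw [hc', Finset.mul_sum]
        apply Finset.sum_congr rfl
        intro j hj
        rw [Finset.mem_Icc] at hj
        calc d * (c' j * (a j / d)) = c' j * (a j / d * d) := by ring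
          _ = c' j * a j := by rw [Nat.div_mul_cancel (hdvd j hj.1 hj.2)]
      -- decompose n
      obtain ⟨c, hc⟩ := hn
      rw [Finset.sum_Icc_succ_top (by omega : 1 ≤ m + 1)] at hc
      set q := c (m+1) / d with hq
      set r := c (m+1) % d with hr
      have hrd : r < d := Nat.mod_lt _ hd
      have hc2 : c (m+1) * a (m+1) = q * (d * a (m+1)) + r * a (m+1) := by
        conv_lhs => rw [← Nat.div_add_mod (c (m+1)) d]
        ring
      have hsum1 : ∑ i ∈ Finset.Icc 1 m, (c i + q * c' i) * a i
          = ∑ i ∈ Finset.Icc 1 m, c i * a i + ∑ i ∈ Finset.Icc 1 m, q * (c' i * a i) := by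
        rw [← Finset.sum_add_distrib]
        apply Finset.sum_congr rfl
        intro j _; ring
      have hsplit : n = ∑ i ∈ Finset.Icc 1 m, (c i + q * c' i) * a i + r * a (m+1) := by
        rw [hc, hc2, hgen, Finset.mul_sum, hsum1]
        ring
      have hdsum : ∀ b : ℕ → ℕ, ∑ i ∈ Finset.Icc 1 m, b i * a i
          = d * ∑ i ∈ Finset.Icc 1 m, b i * a' i := by
        intro b
        rw [Finset.mul_sum]
        apply Finset.sum_congr rfl
        intro j hj
        rw [Finset.mem_Icc] at hj
        rw [hmul j hj.1 hj.2]; ring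
      have ht : InSemigroup m a' (∑ i ∈ Finset.Icc 1 m, (c i + q * c' i) * a' i) :=
        ⟨fun i => c i + q * c' i, rfl⟩
      obtain ⟨k, hk1, hk2⟩ := ih a' hm h' _ ht
      refine ⟨fun j => if j = m+1 then r else k j, ?_, ?_⟩
      · intro i h2 hi
        by_cases hcase : i = m+1
        · subst hcase
          beta_reduce
          rw [if_pos rfl]
          simp only [Nat.add_sub_cancel, hone, Nat.div_one]
          omega
        · beta_reduce
          rw [if_neg hcase]
          rw [← heq i h2 (by omega)]
          exact hk1 i h2 (by omega)
      · beta_reduce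
        rw [Finset.sum_Icc_succ_top (by omega : 1 ≤ m + 1), if_pos rfl]
        have hrest : ∑ i ∈ Finset.Icc 1 m, (if i = m+1 then r else k i) * a i
            = ∑ i ∈ Finset.Icc 1 m, k i * a i := by
          apply Finset.sum_congr rfl
          intro j hj
          rw [Finset.mem_Icc] at hj
          rw [if_neg (by omega)]
        rw [hrest, hsplit, hdsum (fun i => c i + q * c' i), hk2, ← hdsum k]

lemma UN (m : ℕ) : ∀ a : ℕ → ℕ, 1 ≤ m → Hyp m a →
    ∀ k k' : ℕ → ℕ,
      (∀ i, 2 ≤ i → i ≤ m → k i ≤ dseq a (i-1) / dseq a i - 1) →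
      (∀ i, 2 ≤ i → i ≤ m → k' i ≤ dseq a (i-1) / dseq a i - 1) →
      (∑ i ∈ Finset.Icc 2 m, k i * a i) ≡ (∑ i ∈ Finset.Icc 2 m, k' i * a i) [MOD a 1] →
      ∀ i, 2 ≤ i → i ≤ m → k i = k' i := by
  induction m with
  | zero => omega
  | succ m ih =>
    intro a _ h k k' hb hb' hcong i h2 hi
    rcases Nat.eq_zero_or_pos m with rfl | hm
    · omega
    · obtain ⟨hpos, hone, htel⟩ := h
      set d := dseq a m with hdset
      have hd : 0 < d := dseq_pos a m hm (hpos 1 le_rfl (by omega))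
      have hdvd : ∀ j, 1 ≤ j → j ≤ m → d ∣ a j := fun j h1 h2 => dseq_dvd a m j h1 h2
      set a' : ℕ → ℕ := fun j => a j / d with ha'
      have hmul : ∀ j, 1 ≤ j → j ≤ m → a j = d * a' j := by
        intro j h1 h2
        exact (Nat.mul_div_cancel' (hdvd j h1 h2)).symm
      have h' : Hyp m a' := shrink m a hm ⟨hpos, hone, htel⟩
      have hds : ∀ i, i ≤ m → dseq a' i = dseq a i / d :=
        fun i hi => dseq_div a d hd i (fun j h1 h2 => hdvd j h1 (h2.trans hi))
      have heq : ∀ i, 2 ≤ i → i ≤ m → dseq a' (i-1) / dseq a' i = dseq a (i-1) / dseq a i := by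
        intro i h2 hi
        rw [hds i hi, hds (i-1) (by omega)]
        exact div_div_div _ _ _ (dseq_dvd_dseq a m i hi) (dseq_dvd_dseq a i (i-1) (by omega))
      have hcop : Nat.gcd d (a (m+1)) = 1 := by
        rw [hdset, ← dseq_succ a m hm]; exact hone
      -- bounds at top
      have hbtop : k (m+1) ≤ d - 1 := by
        have := hb (m+1) (by omega) le_rfl
        simpa [Nat.add_sub_cancel, hone] using this
      have hbtop' : k' (m+1) ≤ d - 1 := by
        have := hb' (m+1) (by omega) le_rfl
        simpa [Nat.add_sub_cancel, hone] using this
      -- split sums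
      rw [Finset.sum_Icc_succ_top (by omega : 2 ≤ m + 1) (fun i => k i * a i),
        Finset.sum_Icc_succ_top (by omega : 2 ≤ m + 1) (fun i => k' i * a i)] at hcong
      -- congruence mod d
      have hdvd1 : d ∣ a 1 := hdvd 1 le_rfl hm
      have hcongd : (∑ i ∈ Finset.Icc 2 m, k i * a i + k (m+1) * a (m+1))
          ≡ (∑ i ∈ Finset.Icc 2 m, k' i * a i + k' (m+1) * a (m+1)) [MOD d] :=
        hcong.of_dvd hdvd1
      have hzero : ∀ kk : ℕ → ℕ, (∑ i ∈ Finset.Icc 2 m, kk i * a i) % d = 0 := by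
        intro kk
        rw [← Nat.dvd_iff_mod_eq_zero]
        apply Finset.dvd_sum
        intro j hj
        rw [Finset.mem_Icc] at hj
        exact Dvd.dvd.mul_left (hdvd j (by omega) hj.2) _
      have hBB : k (m+1) * a (m+1) ≡ k' (m+1) * a (m+1) [MOD d] := by
        unfold Nat.ModEq at hcongd ⊢
        rw [Nat.add_mod, Nat.add_mod (∑ i ∈ Finset.Icc 2 m, k' i * a i), hzero k, hzero k'] at hcongd
        simpa [Nat.mod_mod] using hcongd
      have hkm : k (m+1) = k' (m+1) := by
        have h3 := Nat.ModEq.cancel_right_of_coprime hcop hBB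
        unfold Nat.ModEq at h3
        rwa [Nat.mod_eq_of_lt (by omega), Nat.mod_eq_of_lt (by omega)] at h3
      by_cases hcase : i = m + 1
      · rw [hcase]; exact hkm
      · -- cancel the top term
        rw [hkm] at hcong
        have hcong2 := Nat.ModEq.add_right_cancel' _ hcong
        -- divide by d
        have ha1 : a 1 = d * a' 1 := hmul 1 le_rfl hm
        have hsum : ∀ kk : ℕ → ℕ, ∑ i ∈ Finset.Icc 2 m, kk i * a i
            = d * ∑ i ∈ Finset.Icc 2 m, kk i * a' i := by
          intro kk
          rw [Finset.mul_sum]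
          apply Finset.sum_congr rfl
          intro j hj
          rw [Finset.mem_Icc] at hj
          rw [hmul j (by omega) hj.2]; ring
        rw [ha1, hsum k, hsum k'] at hcong2
        have hcong3 := Nat.ModEq.mul_left_cancel' (by omega) hcong2
        refine ih a' hm h' k k' ?_ ?_ hcong3 i h2 (by omega)
        · intro j hj2 hjm
          rw [heq j hj2 hjm]; exact hb j hj2 (by omega)
        · intro j hj2 hjm
          rw [heq j hj2 hjm]; exact hb' j hj2 (by omega)

lemma L2 (m : ℕ) : ∀ a : ℕ → ℕ, 1 ≤ m → Hyp m a →
    ∀ n : ℤ, ∃ (q : ℤ) (k : ℕ → ℕ),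
      (∀ i, 2 ≤ i → i ≤ m → k i ≤ dseq a (i-1) / dseq a i - 1) ∧
      n = q * a 1 + ∑ i ∈ Finset.Icc 2 m, (k i : ℤ) * a i := by
  induction m with
  | zero => omega
  | succ m ih =>
    intro a _ h n
    rcases Nat.eq_zero_or_pos m with rfl | hm
    · have ha1 : a 1 = 1 := by rw [← dseq_one a]; exact h.2.1
      refine ⟨n, fun _ => 0, by omega, ?_⟩
      simp [ha1]
    · obtain ⟨hpos, hone, htel⟩ := h
      set d := dseq a m with hdset
      have hd : 0 < d := dseq_pos a m hm (hpos 1 le_rfl (by omega))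
      have hdvd : ∀ j, 1 ≤ j → j ≤ m → d ∣ a j := fun j h1 h2 => dseq_dvd a m j h1 h2
      set a' : ℕ → ℕ := fun j => a j / d with ha'
      have hmul : ∀ j, 1 ≤ j → j ≤ m → a j = d * a' j := by
        intro j h1 h2
        exact (Nat.mul_div_cancel' (hdvd j h1 h2)).symm
      have h' : Hyp m a' := shrink m a hm ⟨hpos, hone, htel⟩
      have hds : ∀ i, i ≤ m → dseq a' i = dseq a i / d :=
        fun i hi => dseq_div a d hd i (fun j h1 h2 => hdvd j h1 (h2.trans hi))
      have heq : ∀ i, 2 ≤ i → i ≤ m → dseq a' (i-1) / dseq a' i = dseq a (i-1) / dseq a i := by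
        intro i h2 hi
        rw [hds i hi, hds (i-1) (by omega)]
        exact div_div_div _ _ _ (dseq_dvd_dseq a m i hi) (dseq_dvd_dseq a i (i-1) (by omega))
      have hcop : Nat.gcd d (a (m+1)) = 1 := by
        rw [hdset, ← dseq_succ a m hm]; exact hone
      obtain ⟨u, v, huv⟩ := Nat.isCoprime_iff_coprime.mpr hcop
      set r : ℤ := (n * v) % (d : ℤ) with hrdef
      have hdz : (0:ℤ) < (d:ℤ) := by exact_mod_cast hd
      have hr0 : 0 ≤ r := Int.emod_nonneg _ (by omega)
      have hrlt : r < (d:ℤ) := Int.emod_lt_of_pos _ hdz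
      have h5 : r = n * v - (d:ℤ) * (n * v / d) := by
        rw [hrdef, Int.emod_def]
      have hdiv : n - r * (a (m+1) : ℤ) = (d:ℤ) * (n * u + (n * v / d) * (a (m+1))) := by
        linear_combination (-n) * huv - (a (m+1) : ℤ) * h5
      obtain ⟨q, k, hb, hrep⟩ := ih a' hm h' (n * u + (n * v / d) * (a (m+1)))
      have hcastmul : ∀ j, 1 ≤ j → j ≤ m → (a j : ℤ) = (d : ℤ) * (a' j : ℤ) := by
        intro j h1 h2
        exact_mod_cast congrArg (Nat.cast : ℕ → ℤ) (hmul j h1 h2)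
      refine ⟨q, fun j => if j = m+1 then r.toNat else k j, ?_, ?_⟩
      · intro i h2 hi
        by_cases hcase : i = m+1
        · subst hcase
          beta_reduce
          rw [if_pos rfl]
          simp only [Nat.add_sub_cancel, hone, Nat.div_one]
          omega
        · beta_reduce
          rw [if_neg hcase]
          rw [← heq i h2 (by omega)]
          exact hb i h2 (by omega)
      · beta_reduce
        rw [Finset.sum_Icc_succ_top (by omega : 2 ≤ m + 1), if_pos rfl,
          Int.toNat_of_nonneg hr0]
        have hrest : ∑ i ∈ Finset.Icc 2 m, ((if i = m+1 then r.toNat else k i : ℕ) : ℤ) * a i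
            = (d:ℤ) * ∑ i ∈ Finset.Icc 2 m, (k i : ℤ) * a' i := by
          rw [Finset.mul_sum]
          apply Finset.sum_congr rfl
          intro j hj
          rw [Finset.mem_Icc] at hj
          rw [if_neg (by omega), hcastmul j (by omega) hj.2]
          ring
        rw [hrest]
        have ha1 : (a 1 : ℤ) = (d:ℤ) * (a' 1 : ℤ) := hcastmul 1 le_rfl hm
        have : n - r * (a (m+1) : ℤ) = (d:ℤ) * (q * a' 1 + ∑ i ∈ Finset.Icc 2 m, (k i : ℤ) * a' i) := by
          rw [← hrep]; exact hdiv
        rw [ha1]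
        linarith [this, mul_add (d:ℤ) (q * (a' 1:ℤ)) (∑ i ∈ Finset.Icc 2 m, (k i : ℤ) * a' i)]

lemma mem_iff (m : ℕ) (a : ℕ → ℕ) (hm : 1 ≤ m) (h : Hyp m a) (n : ℕ) (q : ℤ) (k : ℕ → ℕ)
    (hb : ∀ i, 2 ≤ i → i ≤ m → k i ≤ dseq a (i-1) / dseq a i - 1)
    (hrep : (n:ℤ) = q * a 1 + ∑ i ∈ Finset.Icc 2 m, (k i : ℤ) * a i) :
    InSemigroup m a n ↔ 0 ≤ q := by
  have ha1 : (0:ℤ) < (a 1 : ℤ) := by exact_mod_cast h.1 1 le_rfl hm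
  constructor
  · intro hn
    obtain ⟨k', hb', hk'⟩ := L1 m a hm h n hn
    have hsplit : n = k' 1 * a 1 + ∑ i ∈ Finset.Icc 2 m, k' i * a i := by
      rw [hk', ← Finset.insert_Icc_add_one_left_eq_Icc hm, Finset.sum_insert (by simp)]; rfl
    have hz : (n:ℤ) = (k' 1:ℤ) * a 1 + ∑ i ∈ Finset.Icc 2 m, (k' i:ℤ) * a i := by
      exact_mod_cast hsplit
    have hdvd : ((a 1 : ℕ):ℤ) ∣ ((∑ i ∈ Finset.Icc 2 m, k' i * a i : ℕ) : ℤ)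
        - ((∑ i ∈ Finset.Icc 2 m, k i * a i : ℕ) : ℤ) := by
      refine ⟨q - k' 1, ?_⟩
      push_cast
      linarith [hrep, hz]
    have hcong : (∑ i ∈ Finset.Icc 2 m, k i * a i) ≡ (∑ i ∈ Finset.Icc 2 m, k' i * a i) [MOD a 1] :=
      (Nat.modEq_iff_dvd).mpr hdvd
    have hkk := UN m a hm h k k' hb hb' hcong
    have hsums : ∑ i ∈ Finset.Icc 2 m, (k i:ℤ) * a i = ∑ i ∈ Finset.Icc 2 m, (k' i:ℤ) * a i := by
      apply Finset.sum_congr rfl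
      intro j hj
      rw [Finset.mem_Icc] at hj
      rw [hkk j hj.1 hj.2]
    have : q * a 1 = (k' 1 : ℤ) * a 1 := by linarith [hrep, hz, hsums]
    have : q = (k' 1 : ℤ) := mul_right_cancel₀ (by linarith) this
    rw [this]
    positivity
  · intro hq
    refine ⟨fun j => if j = 1 then q.toNat else k j, ?_⟩
    have : ((∑ i ∈ Finset.Icc 1 m, (if i = 1 then q.toNat else k i) * a i : ℕ) : ℤ) = (n:ℤ) := by
      push_cast
      rw [← Finset.insert_Icc_add_one_left_eq_Icc hm, Finset.sum_insert (by simp), if_pos rfl,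
        Int.toNat_of_nonneg hq, hrep]
      congr 1
      apply Finset.sum_congr rfl
      intro j hj
      rw [Finset.mem_Icc] at hj
      rw [if_neg (by omega)]
    exact_mod_cast this.symm

/-- The largest gap of a telescopic numerical semigroup is 2g - 1. -/
theorem stmt3 (m : ℕ) (a : ℕ → ℕ) (h : Telescopic m a)
    (g : ℕ) (hg : g = {n : ℕ | ¬ InSemigroup m a n}.ncard) (hg1 : 1 ≤ g) :
    (2 * g - 1) ∈ {n : ℕ | ¬ InSemigroup m a n} ∧
      ∀ n ∈ {n : ℕ | ¬ InSemigroup m a n}, n ≤ 2 * g - 1 := by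
  classical
  obtain ⟨hm2, hpos, hone, htel⟩ := h
  have hm : 1 ≤ m := by omega
  have hyp : Hyp m a := ⟨hpos, hone, htel⟩
  set E : ℕ → ℕ := fun i => dseq a (i-1) / dseq a i with hE
  set M : ℤ := ∑ i ∈ Finset.Icc 2 m, ((E i - 1 : ℕ) : ℤ) * a i with hM
  set F : ℤ := M - a 1 with hF
  have ha1 : (0:ℤ) < (a 1 : ℤ) := by exact_mod_cast hpos 1 le_rfl hm
  have gap_le : ∀ n : ℕ, ¬ InSemigroup m a n → (n:ℤ) ≤ F := by
    intro n hn
    obtain ⟨q, k, hb, hrep⟩ := L2 m a hm hyp n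
    have hq : ¬ (0 ≤ q) := fun hq0 => hn ((mem_iff m a hm hyp n q k hb hrep).mpr hq0)
    have hsum : ∑ i ∈ Finset.Icc 2 m, (k i:ℤ) * a i ≤ M := by
      rw [hM]
      apply Finset.sum_le_sum
      intro j hj
      rw [Finset.mem_Icc] at hj
      have hbj := hb j hj.1 hj.2
      have hpj : (0:ℤ) ≤ (a j : ℤ) := by positivity
      apply mul_le_mul_of_nonneg_right _ hpj
      exact_mod_cast hbj
    have hq1 : q ≤ -1 := by omega
    have : q * a 1 ≤ -1 * a 1 := mul_le_mul_of_nonneg_right hq1 (le_of_lt ha1) |>.trans_eq rfl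
    rw [hF]
    nlinarith [hrep]
  have sym : ∀ n n' : ℕ, (n:ℤ) + n' = F → (InSemigroup m a n ↔ ¬ InSemigroup m a n') := by
    intro n n' hnn
    obtain ⟨q, k, hb, hrep⟩ := L2 m a hm hyp n
    have hb' : ∀ i, 2 ≤ i → i ≤ m → (E i - 1) - k i ≤ dseq a (i-1)/dseq a i - 1 :=
      fun i h2 hi => by simp only [hE]; omega
    have hrep' : (n':ℤ) = (-1 - q) * a 1
        + ∑ i ∈ Finset.Icc 2 m, (((E i - 1) - k i : ℕ):ℤ) * a i := by
      have hcast : ∀ j ∈ Finset.Icc 2 m,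
          (((E j - 1) - k j : ℕ):ℤ) * a j = ((E j - 1 : ℕ):ℤ) * a j - (k j:ℤ) * a j := by
        intro j hj
        rw [Finset.mem_Icc] at hj
        rw [Nat.cast_sub (hb j hj.1 hj.2)]
        ring
      rw [Finset.sum_congr rfl hcast, Finset.sum_sub_distrib]
      have : (n':ℤ) = F - n := by omega
      rw [this, hF, hM, hrep]
      ring
    rw [mem_iff m a hm hyp n q k hb hrep, mem_iff m a hm hyp n' _ _ hb' hrep']
    omega
  have Fgap : ∀ n : ℕ, (n:ℤ) = F → ¬ InSemigroup m a n := by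
    intro n hn
    rw [mem_iff m a hm hyp n (-1) (fun j => E j - 1) (fun i _ _ => le_rfl)
      (by rw [hn, hF, hM]; push_cast; ring)]
    omega
  have hne : {n : ℕ | ¬ InSemigroup m a n}.Nonempty := by
    apply Set.nonempty_of_ncard_ne_zero; omega
  obtain ⟨w, hw⟩ := hne
  have hF0 : 0 ≤ F := le_trans (by positivity) (gap_le w hw)
  set Fn : ℕ := F.toNat with hFn
  have hFnF : (Fn:ℤ) = F := Int.toNat_of_nonneg hF0
  have hFgap : ¬ InSemigroup m a Fn := Fgap Fn hFnF
  have hgaple : ∀ n, ¬ InSemigroup m a n → n ≤ Fn := fun n hn => by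
    have := gap_le n hn; omega
  have hsym : ∀ n, n ≤ Fn → (InSemigroup m a n ↔ ¬ InSemigroup m a (Fn - n)) := by
    intro n hn
    apply sym
    rw [Nat.cast_sub hn]
    omega
  set s := (Finset.range (Fn+1)).filter (fun n => ¬ InSemigroup m a n) with hs
  set t := (Finset.range (Fn+1)).filter (fun n => InSemigroup m a n) with ht
  have hcards : s.card = t.card := by
    apply Finset.card_bij' (fun n _ => Fn - n) (fun n _ => Fn - n)
    · intro n hn
      rw [hs, Finset.mem_filter, Finset.mem_range] at hn
      rw [ht, Finset.mem_filter, Finset.mem_range]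
      have hnle : n ≤ Fn := by omega
      exact ⟨by omega, not_not.mp (fun hcon => hn.2 ((hsym n hnle).mpr hcon))⟩
    · intro n hn
      rw [ht, Finset.mem_filter, Finset.mem_range] at hn
      rw [hs, Finset.mem_filter, Finset.mem_range]
      have hnle : n ≤ Fn := by omega
      exact ⟨by omega, (hsym n hnle).mp hn.2⟩
    · intro n hn
      rw [hs, Finset.mem_filter, Finset.mem_range] at hn
      omega
    · intro n hn
      rw [ht, Finset.mem_filter, Finset.mem_range] at hn
      omega
  have hsumcard : s.card + t.card = Fn + 1 := by
    have hpt := Finset.card_filter_add_card_filter_not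
      (s := Finset.range (Fn+1)) (p := fun n => InSemigroup m a n)
    rw [Finset.card_range] at hpt
    rw [hs, ht]
    omega
  have hGs : {n : ℕ | ¬ InSemigroup m a n} = ↑s := by
    ext n
    simp only [Set.mem_setOf_eq, hs, Finset.coe_filter, Finset.mem_range]
    exact ⟨fun hn => ⟨by have := hgaple n hn; omega, hn⟩, fun hn => hn.2⟩
  have hgcard : g = s.card := by rw [hg, hGs, Set.ncard_coe_finset]
  have h2g : 2 * g = Fn + 1 := by omega
  constructor
  · show ¬ InSemigroup m a (2*g-1)
    have : 2*g - 1 = Fn := by omega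
    rw [this]
    exact hFgap
  · intro n hn
    have := hgaple n hn
    omega
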